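/- For every relevance relation rel and every plan π ∈ S(s₀, gn₀), the infimum of the costs of plans solving the relaxed HGN planning problem (s₀, gn₀) is at most cost(π); i.e., the optimal cost of the relaxed HGN planning problem is an admissible lower bound on the cost of every solution of the HGN planning problem. -/

import Mathlib

open scoped Classical

/-- An action: precondition, add effects, delete effects, and a nonnegative cost. -/
structure PAction (F : Type*) where
  pre : Set F
  add : Set F
  del : Set F
  cost : NNReal

variable {F : Type*}

/-- The state resulting from applying action `a` in state `s`: `(s \ del a) ∪ add a`. -/
def applyAction (s : Set F) (a : PAction F) : Set F := (s \ a.del) ∪ a.add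

/-- A plan is executable from `s` if each action's precondition holds in the state
produced by the previous actions. -/
def Exec : Set F → List (PAction F) → Prop
  | _, [] => True
  | s, a :: rest => a.pre ⊆ s ∧ Exec (applyAction s a) rest

/-- The state obtained by running a plan from `s`. -/
def runPlan : Set F → List (PAction F) → Set F
  | s, [] => s
  | s, a :: rest => runPlan (applyAction s a) rest

/-- The `i`-th intermediate state `σᵢ` of a plan `π` started in `s`
(the result of executing the first `i` actions). -/
def stateAt (s : Set F) (π : List (PAction F)) (i : ℕ) : Set F := runPlan s (π.take i)

/-- The cost of a plan: the sum of the costs of its actions (with multiplicity). -/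
def planCost (π : List (PAction F)) : NNReal := (π.map PAction.cost).sum

/-- A plan solves the classical planning problem `(s₀, g)` (with `g` a set of states)
if it is executable from `s₀` and its final state lies in `g`. -/
def Solves (s₀ : Set F) (g : Set (Set F)) (π : List (PAction F)) : Prop :=
  Exec s₀ π ∧ stateAt s₀ π π.length ∈ g

/-- A fact `φ` is a landmark of the problem `(s₀, g)` if every solution plan has `φ`
in some intermediate state. -/
def IsLandmark (s₀ : Set F) (g : Set (Set F)) (φ : F) : Prop :=
  ∀ π, Solves s₀ g π → ∃ i ≤ π.length, φ ∈ stateAt s₀ π i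

/-- A goal network: a finite set `T` of nodes, an order relation `prec` on the nodes,
and a goal (a set of states) attached to each node. -/
structure GoalNetwork (F : Type*) (ν : Type*) where
  T : Finset ν
  prec : ν → ν → Prop
  goal : ν → Set (Set F)

variable {ν : Type*}

/-- `prec` is a strict partial order on the nodes of the network. -/
def GoalNetwork.IsStrictOrder (gn : GoalNetwork F ν) : Prop :=
  (∀ t ∈ gn.T, ¬ gn.prec t t) ∧
    (∀ t ∈ gn.T, ∀ u ∈ gn.T, ∀ v ∈ gn.T, gn.prec t u → gn.prec u v → gn.prec t v)

/-- A node is unconstrained if it has no `≺`-predecessor in the network. -/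
def Unconstrained (gn : GoalNetwork F ν) (t : ν) : Prop := ∀ u ∈ gn.T, ¬ gn.prec u t

/-- A plan `π` solves the relaxed HGN planning problem `(s₀, gn)` if it is executable from
`s₀` and there is `τ : T → {0,…,n}` with `σ_{τ t} ∈ goal t` for all `t ∈ T` and
`τ t ≤ τ u` whenever `t ≺ u`. -/
def SolvesRelaxed (s₀ : Set F) (gn : GoalNetwork F ν) (π : List (PAction F)) : Prop :=
  Exec s₀ π ∧ ∃ τ : ν → ℕ,
    (∀ t ∈ gn.T, τ t ≤ π.length ∧ stateAt s₀ π (τ t) ∈ gn.goal t) ∧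
    (∀ t ∈ gn.T, ∀ u ∈ gn.T, gn.prec t u → τ t ≤ τ u)

/-- A fact `φ` is a landmark of the relaxed HGN problem `(s₀, gn)` if every plan solving it
has `φ` in some intermediate state. -/
def IsRelaxedLandmark (s₀ : Set F) (gn : GoalNetwork F ν) (φ : F) : Prop :=
  ∀ π, SolvesRelaxed s₀ gn π → ∃ i ≤ π.length, φ ∈ stateAt s₀ π i

/-- An HGN method: a precondition and a goal network with a distinguished 'last' node `tg`
that is maximal in the network's order. -/
structure Method (F : Type*) (ν : Type*) where
  precond : Set F
  network : GoalNetwork F ν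
  tg : ν
  tg_mem : tg ∈ network.T
  tg_max : ∀ u ∈ network.T, ¬ network.prec tg u

/-- Method application `gn ∘ₜ m` (for node sets taken disjoint): the node set is the union of
the two node sets, the order contains both orders together with `tg ≺ t`, and goals are
inherited (from `network m` on its nodes, from `gn` elsewhere). -/
noncomputable def GoalNetwork.applyMethod (gn : GoalNetwork F ν) (t : ν) (m : Method F ν) :
    GoalNetwork F ν where
  T := gn.T ∪ m.network.T
  prec := fun a b => gn.prec a b ∨ m.network.prec a b ∨ (a = m.tg ∧ b = t)
  goal := fun a => if a ∈ m.network.T then m.network.goal a else gn.goal a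

/-- Goal release `gn − t`: remove node `t` and all orderings involving it. -/
noncomputable def GoalNetwork.release (gn : GoalNetwork F ν) (t : ν) : GoalNetwork F ν where
  T := gn.T.erase t
  prec := fun a b => gn.prec a b ∧ a ≠ t ∧ b ≠ t
  goal := gn.goal

/-- The HGN solution set `S(s₀, gn)` (Definition of solutions to HGN planning problems),
relative to relevance relations `relA` (actions) and `relM` (methods). -/
inductive HGNSol (relA : PAction F → Set (Set F) → Prop)
    (relM : Method F ν → Set (Set F) → Prop) :
    Set F → GoalNetwork F ν → List (PAction F) → Prop
  | base (s : Set F) (gn : GoalNetwork F ν) : gn.T = ∅ → HGNSol relA relM s gn []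
  | satisfied (s : Set F) (gn : GoalNetwork F ν) (t : ν) (π : List (PAction F)) :
      t ∈ gn.T → Unconstrained gn t → s ∈ gn.goal t →
      HGNSol relA relM s (gn.release t) π → HGNSol relA relM s gn π
  | action (s : Set F) (gn : GoalNetwork F ν) (t : ν) (a : PAction F) (π : List (PAction F)) :
      t ∈ gn.T → Unconstrained gn t → a.pre ⊆ s → relA a (gn.goal t) →
      HGNSol relA relM (applyAction s a) gn π → HGNSol relA relM s gn (a :: π)
  | method (s : Set F) (gn : GoalNetwork F ν) (t : ν) (m : Method F ν) (π : List (PAction F)) :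
      t ∈ gn.T → Unconstrained gn t → m.precond ⊆ s → relM m (gn.goal t) →
      Disjoint gn.T m.network.T →
      HGNSol relA relM s (gn.applyMethod t m) π → HGNSol relA relM s gn π

theorem hgnSol_solvesRelaxed {relA : PAction F → Set (Set F) → Prop}
    {relM : Method F ν → Set (Set F) → Prop} {s : Set F} {gn : GoalNetwork F ν}
    {π : List (PAction F)} (h : HGNSol relA relM s gn π) : SolvesRelaxed s gn π := by
  induction h with
  | base s gn hT =>
      refine ⟨trivial, fun _ => 0, ?_, ?_⟩ <;> simp [hT]
  | satisfied s gn t π ht hu hgoal _ ih =>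
      obtain ⟨hexec, τ, hτ1, hτ2⟩ := ih
      refine ⟨hexec, fun u => if u = t then 0 else τ u, ?_, ?_⟩
      · intro u hu'
        by_cases h' : u = t
        · subst h'; simp [stateAt, runPlan, hgoal]
        · have : u ∈ (gn.release t).T := Finset.mem_erase.mpr ⟨h', hu'⟩
          simpa [h', GoalNetwork.release] using hτ1 u this
      · intro u hu' v hv' hprec
        by_cases hvt : v = t
        · exact absurd (hvt ▸ hprec) (hu u hu')
        by_cases hut : u = t
        · simp [hut, hvt]
        · have hu'' : u ∈ (gn.release t).T := Finset.mem_erase.mpr ⟨hut, hu'⟩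
          have hv'' : v ∈ (gn.release t).T := Finset.mem_erase.mpr ⟨hvt, hv'⟩
          simpa [hut, hvt] using hτ2 u hu'' v hv'' ⟨hprec, hut, hvt⟩
  | action s gn t a π ht hu hpre hrel _ ih =>
      obtain ⟨hexec, τ, hτ1, hτ2⟩ := ih
      refine ⟨⟨hpre, hexec⟩, fun u => τ u + 1, ?_, ?_⟩
      · intro u hu'
        obtain ⟨h1, h2⟩ := hτ1 u hu'
        exact ⟨by simpa using Nat.add_le_add_right h1 1, h2⟩
      · intro u hu' v hv' hprec
        exact Nat.add_le_add_right (hτ2 u hu' v hv' hprec) 1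
  | method s gn t m π ht hu hpre hrel hdisj _ ih =>
      obtain ⟨hexec, τ, hτ1, hτ2⟩ := ih
      refine ⟨hexec, τ, ?_, ?_⟩
      · intro u hu'
        have hmem : u ∈ (gn.applyMethod t m).T := Finset.mem_union_left _ hu'
        have hnot : u ∉ m.network.T := fun h' => (Finset.disjoint_left.mp hdisj hu') h'
        have := hτ1 u hmem
        simpa [GoalNetwork.applyMethod, hnot] using this
      · intro u hu' v hv' hprec
        exact hτ2 u (Finset.mem_union_left _ hu') v (Finset.mem_union_left _ hv')
          (Or.inl hprec)

/-- The optimal cost of the relaxed HGN planning problem is an admissible lower bound on the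
cost of every solution of the HGN planning problem, for any relevance relations. -/
theorem relaxed_optimal_le_hgnSol_cost (s₀ : Set F) (gn₀ : GoalNetwork F ν)
    (hstrict : gn₀.IsStrictOrder)
    (relA : PAction F → Set (Set F) → Prop) (relM : Method F ν → Set (Set F) → Prop)
    (π : List (PAction F)) (hπ : HGNSol relA relM s₀ gn₀ π) :
    sInf {r : NNReal | ∃ π', SolvesRelaxed s₀ gn₀ π' ∧ planCost π' = r} ≤ planCost π :=
  csInf_le (OrderBot.bddBelow _) ⟨π, hgnSol_solvesRelaxed hπ, rfl⟩
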